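/- Let Z be a real Hilbert space and let T, A : Z → Z be bounded linear operators. Suppose x, x̄ : [0,∞) → Z are differentiable with continuous derivatives, T x'(t) = A x(t) for all t ≥ 0, and T* x̄'(t) = A* x̄(t) for all t ≥ 0. Then for every t ≥ 0, ⟨x̄(0), T x(t)⟩ = ⟨x̄(t), T x(0)⟩, where ⟨·,·⟩ is the inner product of Z. -/

import Mathlib

open MeasureTheory Filter Topology ContinuousLinearMap
open scoped RealInnerProductSpace

/-- Conservation identity pairing a primal PIE trajectory with a dual PIE
trajectory: `⟨x̄(0), T x(t)⟩ = ⟨x̄(t), T x(0)⟩` for all `t ≥ 0`. -/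
theorem primal_dual_conservation
    {Z : Type*} [NormedAddCommGroup Z] [InnerProductSpace ℝ Z] [CompleteSpace Z]
    (T A : Z →L[ℝ] Z) (x xb : ℝ → Z)
    (hx : ∀ t ∈ Set.Ici (0:ℝ), DifferentiableAt ℝ x t)
    (hx' : ContinuousOn (deriv x) (Set.Ici (0:ℝ)))
    (hxb : ∀ t ∈ Set.Ici (0:ℝ), DifferentiableAt ℝ xb t)
    (hxb' : ContinuousOn (deriv xb) (Set.Ici (0:ℝ)))
    (hxeq : ∀ t ∈ Set.Ici (0:ℝ), T (deriv x t) = A (x t))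
    (hxbeq : ∀ t ∈ Set.Ici (0:ℝ), (adjoint T) (deriv xb t) = (adjoint A) (xb t)) :
    ∀ t ∈ Set.Ici (0:ℝ), ⟪xb 0, T (x t)⟫ = ⟪xb t, T (x 0)⟫ := by
  intro t ht
  rw [Set.mem_Ici] at ht
  set f : ℝ → ℝ := fun s => ⟪xb s, T (x (t - s))⟫ with hf
  -- derivative of f is zero on [0, t]
  have hderiv : ∀ s ∈ Set.Icc (0:ℝ) t, HasDerivAt f 0 s := by
    intro s hs
    have hs0 : (0:ℝ) ≤ s := hs.1
    have hts : (0:ℝ) ≤ t - s := by linarith [hs.2]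
    have hgx : HasDerivAt (fun s : ℝ => x (t - s)) (-(deriv x (t - s))) s := by
      have h1 : HasDerivAt (fun s : ℝ => t - s) (-1) s := by
        exact (hasDerivAt_id' s).const_sub t
      have h2 : HasDerivAt x (deriv x (t - s)) (t - s) :=
        (hx _ (Set.mem_Ici.2 hts)).hasDerivAt
      have h3 := h2.scomp s h1
      rw [neg_one_smul] at h3
      exact h3
    have hTx : HasDerivAt (fun s : ℝ => T (x (t - s))) (T (-(deriv x (t - s)))) s :=
      T.hasFDerivAt.comp_hasDerivAt s hgx
    have hxbd : HasDerivAt xb (deriv xb s) s := (hxb _ (Set.mem_Ici.2 hs0)).hasDerivAt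
    have hmain := hxbd.inner ℝ hTx
    have key : -⟪xb s, T (deriv x (t - s))⟫ + ⟪deriv xb s, T (x (t - s))⟫ = 0 := by
      rw [hxeq _ (Set.mem_Ici.2 hts),
        ← ContinuousLinearMap.adjoint_inner_left T, hxbeq _ (Set.mem_Ici.2 hs0),
        ContinuousLinearMap.adjoint_inner_left]
      ring
    simpa [key] using hmain
  have hcont : ContinuousOn f (Set.Icc 0 t) := fun s hs =>
    ((hderiv s hs).continuousAt).continuousWithinAt
  have := constant_of_has_deriv_right_zero hcont
    (fun s hs => ((hderiv s (Set.mem_Icc_of_Ico hs)).hasDerivWithinAt))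
    t (Set.mem_Icc.2 ⟨ht, le_rfl⟩)
  simpa [hf] using this.symm
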